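/- For two functions f, g : X → ℝ on the same space, the Reeb radii satisfy |ρ_f(x,y) − ρ_g(x,y)| ≤ 2‖f − g‖_∞ for all x, y ∈ X, where ρ_h(x,y) := inf over paths γ from x to y of sup_t |h(x) − h(γ(t))|. -/

import Mathlib

open scoped ENNReal unitInterval

/-- The Reeb radius: infimum over continuous paths from `x` to `y` of the
supremum of `|f x - f (γ t)|` along the path. -/
noncomputable def reebRadius {X : Type*} [TopologicalSpace X] (f : X → ℝ) (x y : X) : ℝ≥0∞ :=
  ⨅ γ : Path x y, ⨆ t : unitInterval, ENNReal.ofReal |f x - f (γ t)|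

lemma reebRadius_key {X : Type*} [TopologicalSpace X] (f g : X → ℝ) (D : ℝ)
    (hD : ∀ z, |f z - g z| ≤ D) (x y : X) :
    reebRadius f x y ≤ reebRadius g x y + ENNReal.ofReal (2 * D) := by
  unfold reebRadius
  rw [ENNReal.iInf_add]
  refine le_iInf fun γ => (iInf_le _ γ).trans ?_
  refine iSup_le fun t => ?_
  calc ENNReal.ofReal |f x - f (γ t)|
      ≤ ENNReal.ofReal (|g x - g (γ t)| + 2 * D) := by
        refine ENNReal.ofReal_le_ofReal ?_
        have h1 := hD x
        have h2 := hD (γ t)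
        have : |f x - f (γ t)| ≤ |f x - g x| + |g x - g (γ t)| + |g (γ t) - f (γ t)| := by
          calc |f x - f (γ t)| = |(f x - g x) + (g x - g (γ t)) + (g (γ t) - f (γ t))| := by
                ring_nf
            _ ≤ _ := by
                exact (abs_add_le _ _).trans (add_le_add_left (abs_add_le _ _) _)
        have h3 : |g (γ t) - f (γ t)| ≤ D := by rw [abs_sub_comm]; exact h2
        linarith
    _ ≤ ENNReal.ofReal |g x - g (γ t)| + ENNReal.ofReal (2 * D) :=
        ENNReal.ofReal_add_le
    _ ≤ (⨆ t : unitInterval, ENNReal.ofReal |g x - g (γ t)|) + ENNReal.ofReal (2 * D) :=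
        add_le_add_left (le_iSup (fun t : unitInterval => ENNReal.ofReal |g x - g (γ t)|) t) _

theorem reebRadius_perturbation_bound {X : Type*} [TopologicalSpace X] [PathConnectedSpace X]
    (f g : X → ℝ) (hf : Continuous f) (hg : Continuous g)
    (hbf : ∃ C : ℝ, ∀ x, |f x| ≤ C) (hbg : ∃ C : ℝ, ∀ x, |g x| ≤ C)
    (hfin_f : ∀ x y : X, reebRadius f x y ≠ ⊤)
    (hfin_g : ∀ x y : X, reebRadius g x y ≠ ⊤) :
    ∀ x y : X,
      |(reebRadius f x y).toReal - (reebRadius g x y).toReal| ≤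
        2 * ⨆ x : X, |f x - g x| := by
  intro x y
  obtain ⟨Cf, hCf⟩ := hbf
  obtain ⟨Cg, hCg⟩ := hbg
  set D := ⨆ x : X, |f x - g x| with hDdef
  have hbdd : BddAbove (Set.range fun z : X => |f z - g z|) := by
    refine ⟨Cf + Cg, ?_⟩
    rintro _ ⟨z, rfl⟩
    calc |f z - g z| ≤ |f z| + |g z| := abs_sub _ _
      _ ≤ Cf + Cg := add_le_add (hCf z) (hCg z)
  have hDle : ∀ z, |f z - g z| ≤ D := fun z => le_ciSup hbdd z
  have hD0 : 0 ≤ D := le_trans (abs_nonneg _) (hDle (Classical.arbitrary X))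
  have h1 := reebRadius_key f g D hDle x y
  have h2 := reebRadius_key g f D (fun z => by rw [abs_sub_comm]; exact hDle z) x y
  have hne : ENNReal.ofReal (2 * D) ≠ ⊤ := ENNReal.ofReal_ne_top
  have e1 : (reebRadius f x y).toReal ≤ (reebRadius g x y).toReal + 2 * D := by
    have := (ENNReal.toReal_le_toReal (hfin_f x y)
      (ENNReal.add_ne_top.mpr ⟨hfin_g x y, hne⟩)).mpr h1
    rwa [ENNReal.toReal_add (hfin_g x y) hne,
      ENNReal.toReal_ofReal (by linarith)] at this
  have e2 : (reebRadius g x y).toReal ≤ (reebRadius f x y).toReal + 2 * D := by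
    have := (ENNReal.toReal_le_toReal (hfin_g x y)
      (ENNReal.add_ne_top.mpr ⟨hfin_f x y, hne⟩)).mpr h2
    rwa [ENNReal.toReal_add (hfin_f x y) hne,
      ENNReal.toReal_ofReal (by linarith)] at this
  rw [abs_sub_le_iff]
  constructor <;> linarith
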